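/- Let W be a finite group acting on a lattice Λ, R = k[Λ] over a field k, and suppose R is free as a module over the invariant ring R^W (e.g. by the Pittie–Steinberg theorem when W is the Weyl group acting on the coweight lattice of an adjoint group). Then the natural map R ⊗_{R^W} R → ∏_{w ∈ W} R, sending f ⊗ g to the tuple ((w·f)·g)_{w ∈ W}, is injective. -/

import Mathlib

open scoped TensorProduct
open AddMonoidAlgebra

/-- The subalgebra of invariants of a group acting by algebra automorphisms. -/
def invariantsSubalgebra {k A W : Type} [CommSemiring k] [Semiring A] [Algebra k A] [Monoid W]
    (σ : W →* (A ≃ₐ[k] A)) : Subalgebra k A where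
  carrier := {f | ∀ w, σ w f = f}
  mul_mem' := fun ha hb w => by rw [map_mul, ha w, hb w]
  add_mem' := fun ha hb w => by rw [map_add, ha w, hb w]
  algebraMap_mem' := fun r w => (σ w).commutes r

/-- The group structure on additive automorphisms (composition), as `AddAut` had in older Mathlib. -/
instance addEquivSelfGroup (A : Type) [Add A] : Group (A ≃+ A) where
  mul g h := AddEquiv.trans h g
  one := AddEquiv.refl _
  inv := AddEquiv.symm
  mul_assoc _ _ _ := rfl
  one_mul _ := rfl
  mul_one _ := rfl
  inv_mul_cancel := AddEquiv.self_trans_symm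

set_option maxHeartbeats 1000000

section Aux

variable {R F W : Type} [CommRing R] [IsDomain R] [Field F] [Algebra R F] [IsFractionRing R F]
  [Group W] [Fintype W]

lemma aux_invariant_frac (σ : W → R ≃+* R) (σ' : W → F ≃+* F)
    (hσ1 : ∀ x : R, σ 1 x = x)
    (hσm : ∀ (u v : W) (x : R), σ u (σ v x) = σ (u * v) x)
    (hcomm : ∀ w r, σ' w (algebraMap R F r) = algebraMap R F (σ w r))
    (a : F) (ha : ∀ u, σ' u a = a) :
    ∃ p q : R, q ≠ 0 ∧ (∀ w, σ w p = p) ∧ (∀ w, σ w q = q) ∧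
      a * algebraMap R F q = algebraMap R F p := by
  classical
  obtain ⟨⟨r, m⟩, hm⟩ := IsLocalization.surj (nonZeroDivisors R) a
  have hm0 : (m : R) ≠ 0 := nonZeroDivisors.ne_zero m.2
  have hm' : a * algebraMap R F (m : R) = algebraMap R F r := hm
  set q : R := ∏ u : W, σ u (m : R) with hq
  have hqinv : ∀ v, σ v q = q := by
    intro v
    rw [hq, map_prod]
    have h1 : ∀ u : W, σ v (σ u (m : R)) = σ (v * u) (m : R) := fun u => hσm v u m
    calc ∏ u : W, σ v (σ u (m : R)) = ∏ u : W, σ (v * u) (m : R) := by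
          exact Finset.prod_congr rfl fun u _ => h1 u
      _ = ∏ u : W, σ u (m : R) := by
          exact Fintype.prod_equiv (Equiv.mulLeft v) _ _ fun u => rfl
  have hsplit : q = σ 1 (m : R) * ∏ u ∈ Finset.univ.erase 1, σ u (m : R) :=
    (Finset.mul_prod_erase _ _ (Finset.mem_univ 1)).symm
  set p : R := r * ∏ u ∈ Finset.univ.erase 1, σ u (m : R) with hp
  have heq : a * algebraMap R F q = algebraMap R F p := by
    rw [hsplit, hσ1, map_mul, ← mul_assoc, hm', hp, map_mul]
  have hpinv : ∀ v, σ v p = p := by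
    intro v
    have h2 := congrArg (σ' v) heq
    rw [map_mul, ha, hcomm, hcomm, hqinv] at h2
    exact IsFractionRing.injective R F (by rw [← h2, heq])
  refine ⟨p, q, ?_, hpinv, hqinv, heq⟩
  exact Finset.prod_ne_zero_iff.mpr fun u _ h =>
    hm0 ((σ u).injective (by rw [h, map_zero]))

lemma aux_key {I : Type} (σ : W → R ≃+* R) (σ' : W → F ≃+* F)
    (hσ1 : ∀ x : R, σ 1 x = x)
    (hσm : ∀ (u v : W) (x : R), σ u (σ v x) = σ (u * v) x)
    (hcomm : ∀ w r, σ' w (algebraMap R F r) = algebraMap R F (σ w r))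
    (be : I → R)
    (hli : ∀ (J : Finset I) (s : I → R), (∀ i w, σ w (s i) = s i) →
      (∑ i ∈ J, s i * be i) = 0 → ∀ i ∈ J, s i = 0) :
    ∀ (n : ℕ) (J : Finset I) (c : I → F), J.card ≤ n →
      (∀ w, ∑ i ∈ J, c i * σ' w (algebraMap R F (be i)) = 0) → ∀ i ∈ J, c i = 0 := by
  classical
  intro n
  induction n with
  | zero =>
    intro J c hcard _ i hi
    rw [Nat.le_zero, Finset.card_eq_zero] at hcard
    subst hcard
    exact absurd hi (Finset.notMem_empty i)
  | succ n ih =>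
    intro J c hcard hrel
    by_contra hne
    push_neg at hne
    obtain ⟨i₀, hi₀J, hi₀⟩ := hne
    set d : I → F := fun i => if i ∈ J then (c i₀)⁻¹ * c i else 0 with hd
    have hdrel : ∀ w, ∑ i ∈ J, d i * σ' w (algebraMap R F (be i)) = 0 := by
      intro w
      have h0 : ∑ i ∈ J, d i * σ' w (algebraMap R F (be i))
          = (c i₀)⁻¹ * ∑ i ∈ J, c i * σ' w (algebraMap R F (be i)) := by
        rw [Finset.mul_sum]
        exact Finset.sum_congr rfl fun i hi => by simp [hd, hi, mul_assoc]
      rw [h0, hrel, mul_zero]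
    have hdi₀ : d i₀ = 1 := by simp [hd, hi₀J, inv_mul_cancel₀ hi₀]
    have hcompose : ∀ (u w : W) (i : I),
        σ' u (σ' (u⁻¹ * w) (algebraMap R F (be i))) = σ' w (algebraMap R F (be i)) := by
      intro u w i
      rw [hcomm, hcomm, hσm, mul_inv_cancel_left, hcomm]
    have hfix : ∀ (u : W) (i : I), σ' u (d i) = d i := by
      intro u i
      have herel : ∀ w, ∑ j ∈ J.erase i₀,
          (d j - σ' u (d j)) * σ' w (algebraMap R F (be j)) = 0 := by
        intro w
        have hJ : ∑ j ∈ J, (d j - σ' u (d j)) * σ' w (algebraMap R F (be j)) = 0 := by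
          have hsub : ∑ j ∈ J, (d j - σ' u (d j)) * σ' w (algebraMap R F (be j))
              = (∑ j ∈ J, d j * σ' w (algebraMap R F (be j)))
                - ∑ j ∈ J, σ' u (d j) * σ' w (algebraMap R F (be j)) := by
            rw [← Finset.sum_sub_distrib]
            exact Finset.sum_congr rfl fun j _ => by ring
          have hsecond : ∑ j ∈ J, σ' u (d j) * σ' w (algebraMap R F (be j)) = 0 := by
            have : ∑ j ∈ J, σ' u (d j) * σ' w (algebraMap R F (be j))
                = σ' u (∑ j ∈ J, d j * σ' (u⁻¹ * w) (algebraMap R F (be j))) := by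
              rw [map_sum]
              exact Finset.sum_congr rfl fun j _ => by rw [map_mul, hcompose]
            rw [this, hdrel, map_zero]
          rw [hsub, hdrel, hsecond, sub_zero]
        have := Finset.sum_erase_add J
          (fun j => (d j - σ' u (d j)) * σ' w (algebraMap R F (be j))) hi₀J
        simp only [hdi₀, map_one, sub_self, zero_mul, add_zero] at this
        rw [this, hJ]
      have hcarde : (J.erase i₀).card ≤ n := by
        have := Finset.card_erase_of_mem hi₀J
        omega
      have hz := ih (J.erase i₀) (fun j => d j - σ' u (d j)) hcarde herel
      by_cases hiJ : i ∈ J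
      · by_cases hii : i = i₀
        · rw [hii, hdi₀, map_one]
        · have := hz i (Finset.mem_erase.mpr ⟨hii, hiJ⟩)
          have := sub_eq_zero.mp this
          exact this.symm
      · simp only [hd]
        rw [if_neg hiJ, map_zero]
    have hex : ∀ i, ∃ p q : R, q ≠ 0 ∧ (∀ w, σ w p = p) ∧ (∀ w, σ w q = q) ∧
        d i * algebraMap R F q = algebraMap R F p :=
      fun i => aux_invariant_frac σ σ' hσ1 hσm hcomm (d i) (fun u => hfix u i)
    choose p q hq0 hpinv hqinv hpq using hex
    have hrel1 : ∑ i ∈ J, d i * algebraMap R F (be i) = 0 := by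
      have := hdrel 1
      calc ∑ i ∈ J, d i * algebraMap R F (be i)
          = ∑ i ∈ J, d i * σ' 1 (algebraMap R F (be i)) := by
            exact Finset.sum_congr rfl fun i _ => by rw [hcomm, hσ1]
        _ = 0 := this
    have hRrel : ∑ i ∈ J, (p i * ∏ j ∈ J.erase i, q j) * be i = 0 := by
      apply IsFractionRing.injective R F
      rw [map_sum, map_zero]
      calc ∑ i ∈ J, algebraMap R F ((p i * ∏ j ∈ J.erase i, q j) * be i)
          = ∑ i ∈ J, (d i * algebraMap R F (be i)) * algebraMap R F (∏ j ∈ J, q j) := by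
            refine Finset.sum_congr rfl fun i hi => ?_
            rw [← Finset.mul_prod_erase J q hi]
            rw [map_mul, map_mul, ← hpq i]
            push_cast [map_mul, map_prod]
            ring
        _ = (∑ i ∈ J, d i * algebraMap R F (be i)) * algebraMap R F (∏ j ∈ J, q j) := by
            rw [Finset.sum_mul]
        _ = 0 := by rw [hrel1, zero_mul]
    have hps : ∀ i ∈ J, p i * ∏ j ∈ J.erase i, q j = 0 := by
      refine hli J _ (fun i w => ?_) hRrel
      rw [map_mul, hpinv, map_prod]
      exact congrArg _ (Finset.prod_congr rfl fun j _ => hqinv j w)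
    have hprod0 : (∏ j ∈ J.erase i₀, q j) ≠ 0 :=
      Finset.prod_ne_zero_iff.mpr fun j _ => hq0 j
    have hp0 : p i₀ = 0 := by
      rcases mul_eq_zero.mp (hps i₀ hi₀J) with h | h
      · exact h
      · exact absurd h hprod0
    have hd0 : d i₀ * algebraMap R F (q i₀) = 0 := by rw [hpq, hp0, map_zero]
    have hqF : algebraMap R F (q i₀) ≠ 0 := fun h =>
      hq0 i₀ (IsFractionRing.injective R F (by rw [h, map_zero]))
    have : d i₀ = 0 := by
      rcases mul_eq_zero.mp hd0 with h | h
      · exact h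
      · exact absurd h hqF
    rw [hdi₀] at this
    exact one_ne_zero this

end Aux

/-- for a finite group `W` acting on the lattice `Λ` and hence on `R = k[Λ]`,
if `R` is free over `R^W`, then the map `R ⊗_{R^W} R → ∏_{w ∈ W} R`,
`f ⊗ g ↦ ((w·f)·g)_w`, is injective. -/
theorem stmt3 {k Λ W : Type} [Field k] [AddCommGroup Λ] [Module.Free ℤ Λ] [Module.Finite ℤ Λ]
    [Group W] [Finite W]
    (ρ : W →* (Λ ≃+ Λ))
    (σ : W →* (AddMonoidAlgebra k Λ ≃ₐ[k] AddMonoidAlgebra k Λ))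
    (hσρ : ∀ (w : W) (l : Λ),
      σ w (AddMonoidAlgebra.single l (1 : k)) = AddMonoidAlgebra.single (ρ w l) (1 : k))
    (hfree : Module.Free (invariantsSubalgebra σ) (AddMonoidAlgebra k Λ))
    (φ : (AddMonoidAlgebra k Λ ⊗[(invariantsSubalgebra σ)] AddMonoidAlgebra k Λ) →+
      (W → AddMonoidAlgebra k Λ))
    (hφ : ∀ f g : AddMonoidAlgebra k Λ,
      φ (f ⊗ₜ[(invariantsSubalgebra σ)] g) = fun w => σ w f * g) :
    Function.Injective φ := by
  classical
  set R := AddMonoidAlgebra k Λ with hR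
  haveI : TwoUniqueSums Λ :=
    TwoUniqueSums.of_injective_addHom _ (Module.Free.chooseBasis ℤ Λ).repr.injective
      inferInstance
  haveI : IsDomain R := by
    haveI : Nonempty Λ := ⟨0⟩
    exact NoZeroDivisors.to_isDomain R
  haveI := Fintype.ofFinite W
  set F := FractionRing R with hF
  set σR : W → R ≃+* R := fun w => (σ w).toRingEquiv with hσR
  have hσ1 : ∀ x : R, σR 1 x = x := by
    intro x
    show (σ 1).toRingEquiv x = x
    rw [map_one σ]
    rfl
  have hσm : ∀ (u v : W) (x : R), σR u (σR v x) = σR (u * v) x := by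
    intro u v x
    show (σ u) ((σ v) x) = (σ (u * v)) x
    rw [map_mul σ]
    rfl
  have hmap : ∀ w : W, (nonZeroDivisors R).map (σR w).toMonoidHom = nonZeroDivisors R := by
    intro w
    ext x
    simp only [Submonoid.mem_map]
    constructor
    · rintro ⟨y, hy, rfl⟩
      exact map_mem_nonZeroDivisors (σR w) (σR w).injective hy
    · intro hx
      exact ⟨(σR w).symm x,
        map_mem_nonZeroDivisors (σR w).symm (σR w).symm.injective hx,
        (σR w).apply_symm_apply x⟩
  set σF : W → F ≃+* F := fun w =>
    IsLocalization.ringEquivOfRingEquiv (M := nonZeroDivisors R) (T := nonZeroDivisors R)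
      F F (σR w) (hmap w) with hσF
  have hcomm : ∀ (w : W) (r : R), σF w (algebraMap R F r) = algebraMap R F (σR w r) :=
    fun w r => IsLocalization.ringEquivOfRingEquiv_eq (hmap w) r
  -- the basis of R over the invariants
  let I := Module.Free.ChooseBasisIndex ↥(invariantsSubalgebra σ) R
  let be : Module.Basis I ↥(invariantsSubalgebra σ) R := Module.Free.chooseBasis _ _
  have hli : ∀ (J : Finset I) (s : I → R), (∀ i w, σR w (s i) = s i) →
      (∑ i ∈ J, s i * be i) = 0 → ∀ i ∈ J, s i = 0 := by
    intro J s hinv hsum i hi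
    have hmem : ∀ j, s j ∈ invariantsSubalgebra σ := fun j w => hinv j w
    set s' : I → ↥(invariantsSubalgebra σ) := fun j => ⟨s j, hmem j⟩ with hs'
    have hsum' : ∑ j ∈ J, s' j • be j = 0 := by
      rw [← hsum]
      exact Finset.sum_congr rfl fun j _ => rfl
    have h0 := linearIndependent_iff'.mp be.linearIndependent J s' hsum' i hi
    have : (s' i : R) = 0 := by rw [h0]; rfl
    exact this
  rw [injective_iff_map_eq_zero]
  intro x hx
  let b : Module.Basis I R (R ⊗[↥(invariantsSubalgebra σ)] R) := Algebra.TensorProduct.basis R be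
  set a := b.repr x with ha
  have hxa : (a.sum fun i r => r • b i) = x := by
    rw [← Finsupp.linearCombination_apply]
    exact b.linearCombination_repr x
  have h1 : ∀ w, ∑ i ∈ a.support, σR w (a i) * be i = 0 := by
    intro w
    have h3 : φ x = a.sum fun i r => fun w' => σR w' r * be i := by
      conv_lhs => rw [← hxa]
      rw [map_finsuppSum]
      refine Finsupp.sum_congr fun i _ => ?_
      rw [show (a i) • b i = (a i) ⊗ₜ[↥(invariantsSubalgebra σ)] (be i) from
        Algebra.TensorProduct.basis_repr_symm_apply' be (a i) i]
      exact hφ _ _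
    have h4 : (a.sum fun i r => fun w' => σR w' r * be i) w = 0 := by
      rw [← h3, hx]
      rfl
    rw [Finsupp.sum, Finset.sum_apply] at h4
    exact h4
  have h2 : ∀ w, ∑ i ∈ a.support, (a i) * σR w (be i) = 0 := by
    intro w
    have h5 := congrArg (σR w) (h1 w⁻¹)
    rw [map_sum, map_zero] at h5
    rw [← h5]
    refine Finset.sum_congr rfl fun i _ => ?_
    rw [map_mul, hσm, mul_inv_cancel, hσ1]
  have h3 : ∀ w, ∑ i ∈ a.support, (algebraMap R F (a i)) * σF w (algebraMap R F (be i)) = 0 := by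
    intro w
    have h6 := congrArg (algebraMap R F) (h2 w)
    rw [map_sum, map_zero] at h6
    rw [← h6]
    refine Finset.sum_congr rfl fun i _ => ?_
    rw [map_mul, hcomm]
  have h7 := aux_key σR σF hσ1 hσm hcomm (fun i => be i) hli a.support.card a.support
      (fun i => algebraMap R F (a i)) le_rfl h3
  have ha0 : a = 0 := by
    refine Finsupp.ext fun i => ?_
    rw [Finsupp.coe_zero, Pi.zero_apply]
    by_cases hi : i ∈ a.support
    · refine IsFractionRing.injective R F ?_
      rw [map_zero]
      exact h7 i hi
    · exact Finsupp.notMem_support_iff.mp hi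
  have hb0 : b.repr x = 0 := by rw [← ha, ha0]
  exact (LinearEquiv.map_eq_zero_iff b.repr).mp hb0
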